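/- (Lemma 3.1) The set of vectors (x1, x2, x3, X11, X22, X33, X12, X13, X23) ∈ ℝ⁹ such that (x, X) ∈ QPB₃ and 4·x1 + 4·X11 − 4·X12 − 4·X13 + X23 = 0 has affine dimension exactly 5; that is, the direction of the affine span of this set is a linear subspace of ℝ⁹ of dimension 5. -/

import Mathlib

/-- The unit box in ℝ³. -/
def Box3 : Set (Fin 3 → ℝ) := {x | ∀ i, 0 ≤ x i ∧ x i ≤ 1}

/-- `QPB₃`: the convex hull of the rank-one lifted points of the unit box, in the space of
pairs `(x, X)` where `X` is a `3 × 3` real matrix. -/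
noncomputable def QPB3 : Set ((Fin 3 → ℝ) × Matrix (Fin 3) (Fin 3) ℝ) :=
  convexHull ℝ {p | ∃ x ∈ Box3, p = (x, Matrix.of fun i j => x i * x j)}

/-- The points of `QPB₃`, viewed as vectors
`(x1, x2, x3, X11, X22, X33, X12, X13, X23) ∈ ℝ⁹`, on which the constraint
`4·x1 + 4·X11 − 4·X12 − 4·X13 + X23 ≥ 0` is tight. -/
noncomputable def tightFace : Set (Fin 9 → ℝ) :=
  {v | ∃ p ∈ QPB3,
    v = ![p.1 0, p.1 1, p.1 2, p.2 0 0, p.2 1 1, p.2 2 2, p.2 0 1, p.2 0 2, p.2 1 2] ∧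
    4 * p.1 0 + 4 * p.2 0 0 - 4 * p.2 0 1 - 4 * p.2 0 2 + p.2 1 2 = 0}

lemma fq_nonneg {a b c : ℝ} (ha : 0 ≤ a) (hb : 0 ≤ b) (hb1 : b ≤ 1)
    (hc : 0 ≤ c) (hc1 : c ≤ 1) : 0 ≤ 4*a + 4*a^2 - 4*a*b - 4*a*c + b*c := by
  rcases le_or_gt (b+c) 1 with h | h
  · nlinarith [mul_nonneg hb hc, mul_nonneg ha (by linarith : (0:ℝ) ≤ 1 - b - c), sq_nonneg a]
  · nlinarith [sq_nonneg (2*a - (b+c-1)), mul_nonneg (by linarith : (0:ℝ) ≤ 1-b) (by linarith : (0:ℝ) ≤ 1-c),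
      mul_nonneg (by linarith : (0:ℝ) ≤ b+c-1) (by linarith : (0:ℝ) ≤ 2-b-c)]

lemma tight_rel {a b c : ℝ} (ha : 0 ≤ a) (ha1 : a ≤ 1) (hb : 0 ≤ b) (hb1 : b ≤ 1)
    (hc : 0 ≤ c) (hc1 : c ≤ 1) (hf : 4*a + 4*a^2 - 4*a*b - 4*a*c + b*c = 0) :
    a = 2*(a*a) ∧ a*b = 2*(a*a) ∧ a*c = 2*(a*a) ∧ b*c = 4*(a*a) := by
  rcases eq_or_lt_of_le ha with h0 | h0
  · have hbc : b * c = 0 := by nlinarith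
    refine ⟨by nlinarith, by nlinarith, by nlinarith, by nlinarith⟩
  · have hs : 1 < b + c := by
      by_contra hcon
      push_neg at hcon
      nlinarith [mul_nonneg hb hc, mul_nonneg h0.le (by linarith : (0:ℝ) ≤ 1 - b - c), mul_pos h0 h0]
    have hid : (2*a-(b+c-1))^2 + (1-b)*(1-c) + (b+c-1)*(2-b-c) = 0 := by linear_combination hf
    have t1 : (0:ℝ) ≤ (2*a-(b+c-1))^2 := sq_nonneg _
    have t2 : (0:ℝ) ≤ (1-b)*(1-c) := mul_nonneg (by linarith) (by linarith)
    have t3 : (0:ℝ) ≤ (b+c-1)*(2-b-c) := mul_nonneg (by linarith) (by linarith)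
    have e3 : (b+c-1)*(2-b-c) = 0 := by linarith
    have hbc2 : b + c = 2 := by
      rcases mul_eq_zero.mp e3 with h | h
      · linarith
      · linarith
    have hb1' : b = 1 := by linarith
    have hc1' : c = 1 := by linarith
    have e1 : (2*a-(b+c-1))^2 = 0 := by linarith
    have ha2 : a = 1/2 := by
      have := pow_eq_zero_iff (n := 2) (by norm_num) |>.mp e1
      linarith
    subst hb1' hc1' ha2; norm_num

/-- On the tight face of `QPB₃` four linear relations hold. -/
lemma face_rel {p : (Fin 3 → ℝ) × Matrix (Fin 3) (Fin 3) ℝ} (hp : p ∈ QPB3)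
    (ht : 4 * p.1 0 + 4 * p.2 0 0 - 4 * p.2 0 1 - 4 * p.2 0 2 + p.2 1 2 = 0) :
    p.1 0 = 2 * p.2 0 0 ∧ p.2 0 1 = 2 * p.2 0 0 ∧ p.2 0 2 = 2 * p.2 0 0 ∧
      p.2 1 2 = 4 * p.2 0 0 := by
  rw [QPB3, convexHull_eq] at hp
  obtain ⟨ι, t, w, z, hw0, hw1, hz, hcm⟩ := hp
  rw [Finset.centerMass_eq_of_sum_1 _ _ hw1] at hcm
  have hzb : ∀ i ∈ t, (z i).1 ∈ Box3 ∧ ∀ a b, (z i).2 a b = (z i).1 a * (z i).1 b := by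
    intro i hi
    obtain ⟨x, hx, hxe⟩ := hz i hi
    rw [hxe]
    exact ⟨hx, fun a b => rfl⟩
  have h1 : ∀ a : Fin 3, p.1 a = ∑ i ∈ t, w i * (z i).1 a := by
    intro a
    rw [← hcm]
    simp [Prod.fst_sum, Finset.sum_apply]
  have h2 : ∀ a b : Fin 3, p.2 a b = ∑ i ∈ t, w i * ((z i).1 a * (z i).1 b) := by
    intro a b
    rw [← hcm]
    rw [Prod.snd_sum, Matrix.sum_apply]
    exact Finset.sum_congr rfl fun i hi => by
      simp [Prod.smul_snd, Matrix.smul_apply, smul_eq_mul, (hzb i hi).2]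
  set A : ι → ℝ := fun i => (z i).1 0 with hA
  set B : ι → ℝ := fun i => (z i).1 1 with hB
  set C : ι → ℝ := fun i => (z i).1 2 with hC
  have hsum : ∑ i ∈ t, w i * (4*A i + 4*(A i)^2 - 4*A i*B i - 4*A i*C i + B i*C i) = 0 := by
    have e : ∑ i ∈ t, w i * (4*A i + 4*(A i)^2 - 4*A i*B i - 4*A i*C i + B i*C i)
        = 4 * (∑ i ∈ t, w i * A i) + 4 * (∑ i ∈ t, w i * (A i * A i))
          - 4 * (∑ i ∈ t, w i * (A i * B i)) - 4 * (∑ i ∈ t, w i * (A i * C i))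
          + ∑ i ∈ t, w i * (B i * C i) := by
      rw [Finset.mul_sum, Finset.mul_sum, Finset.mul_sum, Finset.mul_sum,
        ← Finset.sum_add_distrib, ← Finset.sum_sub_distrib, ← Finset.sum_sub_distrib,
        ← Finset.sum_add_distrib]
      exact Finset.sum_congr rfl fun i _ => by ring
    rw [e, ← h1 0, ← h2 0 0, ← h2 0 1, ← h2 0 2, ← h2 1 2]
    exact ht
  have hterm : ∀ i ∈ t, w i * (4*A i + 4*(A i)^2 - 4*A i*B i - 4*A i*C i + B i*C i) = 0 := by
    refine (Finset.sum_eq_zero_iff_of_nonneg fun i hi => ?_).mp hsum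
    obtain ⟨hbox, -⟩ := hzb i hi
    exact mul_nonneg (hw0 i hi) (fq_nonneg (hbox 0).1 (hbox 1).1 (hbox 1).2 (hbox 2).1 (hbox 2).2)
  have hkey : ∀ i ∈ t, w i * A i = w i * (2*(A i * A i)) ∧ w i * (A i * B i) = w i * (2*(A i * A i))
      ∧ w i * (A i * C i) = w i * (2*(A i * A i)) ∧ w i * (B i * C i) = w i * (4*(A i * A i)) := by
    intro i hi
    rcases mul_eq_zero.mp (hterm i hi) with hw | hf
    · simp [hw]
    · simp only [hA, hB, hC] at hf ⊢
      obtain ⟨hbox, -⟩ := hzb i hi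
      obtain ⟨r1, r2, r3, r4⟩ := tight_rel (hbox 0).1 (hbox 0).2 (hbox 1).1 (hbox 1).2
        (hbox 2).1 (hbox 2).2 hf
      exact ⟨congrArg (w i * ·) r1, congrArg (w i * ·) r2,
        congrArg (w i * ·) r3, congrArg (w i * ·) r4⟩
  refine ⟨?_, ?_, ?_, ?_⟩
  · rw [h1 0, h2 0 0, Finset.mul_sum]
    exact Finset.sum_congr rfl fun i hi => by rw [(hkey i hi).1]; ring
  · rw [h2 0 1, h2 0 0, Finset.mul_sum]
    exact Finset.sum_congr rfl fun i hi => by rw [(hkey i hi).2.1]; ring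
  · rw [h2 0 2, h2 0 0, Finset.mul_sum]
    exact Finset.sum_congr rfl fun i hi => by rw [(hkey i hi).2.2.1]; ring
  · rw [h2 1 2, h2 0 0, Finset.mul_sum]
    exact Finset.sum_congr rfl fun i hi => by rw [(hkey i hi).2.2.2]; ring

/-- The five directions spanning the lower-bound subspace. -/
noncomputable def dv : Fin 5 → (Fin 9 → ℝ) :=
  ![![0,1,0,0,1,0,0,0,0], ![0,0,1,0,0,1,0,0,0], ![0,1/2,0,0,1/4,0,0,0,0],
    ![0,0,1/2,0,0,1/4,0,0,0], ![1/2,1,1,1/4,1,1,1/2,1/2,1]]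

/-- The five generators of the upper-bound subspace. -/
noncomputable def wv : Fin 5 → (Fin 9 → ℝ) :=
  ![![0,1,0,0,0,0,0,0,0], ![0,0,1,0,0,0,0,0,0], ![0,0,0,0,1,0,0,0,0],
    ![0,0,0,0,0,1,0,0,0], ![2,0,0,1,0,0,2,2,4]]

lemma dv_linearIndependent : LinearIndependent ℝ dv := by
  rw [Fintype.linearIndependent_iff]
  intro g hg
  simp only [dv, Fin.sum_univ_five, Matrix.cons_val_zero, Matrix.cons_val_one, Matrix.head_cons,
    Matrix.cons_val_two, Matrix.tail_cons, Matrix.cons_val_three, Matrix.cons_val_four,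
    Matrix.smul_cons, Matrix.smul_empty, smul_eq_mul, Matrix.cons_add_cons,
    Matrix.empty_add_empty, Matrix.cons_eq_zero_iff] at hg
  obtain ⟨e0, e1, e2, e3, e4, e5, e6, e7, e8, -⟩ := hg
  intro i
  fin_cases i <;> simp <;> linarith

/-- Lifting a tight box point into the tight face. -/
lemma lift_mem_tightFace (x : Fin 3 → ℝ) (hx : x ∈ Box3)
    (htight : 4 * x 0 + 4 * (x 0 * x 0) - 4 * (x 0 * x 1) - 4 * (x 0 * x 2) + x 1 * x 2 = 0) :
    (![x 0, x 1, x 2, x 0 * x 0, x 1 * x 1, x 2 * x 2, x 0 * x 1, x 0 * x 2, x 1 * x 2] : Fin 9 → ℝ)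
      ∈ tightFace :=
  ⟨(x, Matrix.of fun i j => x i * x j),
    subset_convexHull ℝ _ ⟨x, hx, rfl⟩, rfl, htight⟩

lemma mem_box (a b c : ℝ) (ha : 0 ≤ a) (ha1 : a ≤ 1) (hb : 0 ≤ b) (hb1 : b ≤ 1)
    (hc : 0 ≤ c) (hc1 : c ≤ 1) : (![a, b, c] : Fin 3 → ℝ) ∈ Box3 := by
  intro i; fin_cases i <;> simp_all

/-- The face of `QPB₃` on which the constraint is tight has affine dimension exactly 5. -/
theorem tightFace_dim :
    Module.finrank ℝ (affineSpan ℝ tightFace).direction = 5 := by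
  -- The tight points we use
  have hq0 : (0 : Fin 9 → ℝ) ∈ tightFace := by
    have h := lift_mem_tightFace ![0, 0, 0] (mem_box 0 0 0 le_rfl zero_le_one le_rfl zero_le_one le_rfl zero_le_one) (by norm_num [Matrix.cons_val_two])
    convert h using 1
    funext j; fin_cases j <;> norm_num [Matrix.cons_val_two]
  have hq : ∀ i : Fin 5, dv i ∈ tightFace := by
    intro i
    fin_cases i
    · have h := lift_mem_tightFace ![0, 1, 0] (mem_box 0 1 0 le_rfl zero_le_one zero_le_one le_rfl le_rfl zero_le_one) (by norm_num [Matrix.cons_val_two])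
      convert h using 1
      funext j; fin_cases j <;> norm_num [dv, Matrix.cons_val_two]
    · have h := lift_mem_tightFace ![0, 0, 1] (mem_box 0 0 1 le_rfl zero_le_one le_rfl zero_le_one zero_le_one le_rfl) (by norm_num [Matrix.cons_val_two])
      convert h using 1
      funext j; fin_cases j <;> norm_num [dv, Matrix.cons_val_two]
    · have h := lift_mem_tightFace ![0, 1/2, 0] (mem_box 0 (1/2) 0 le_rfl zero_le_one (by norm_num) (by norm_num) le_rfl zero_le_one) (by norm_num [Matrix.cons_val_two])
      convert h using 1
      funext j; fin_cases j <;> norm_num [dv, Matrix.cons_val_two]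
    · have h := lift_mem_tightFace ![0, 0, 1/2] (mem_box 0 0 (1/2) le_rfl zero_le_one le_rfl zero_le_one (by norm_num) (by norm_num)) (by norm_num [Matrix.cons_val_two])
      convert h using 1
      funext j; fin_cases j <;> norm_num [dv, Matrix.cons_val_two]
    · have h := lift_mem_tightFace ![1/2, 1, 1] (mem_box (1/2) 1 1 (by norm_num) (by norm_num) zero_le_one le_rfl zero_le_one le_rfl) (by norm_num [Matrix.cons_val_two])
      convert h using 1
      funext j; fin_cases j <;> norm_num [dv, Matrix.cons_val_two]
  -- lower bound
  have hlow : Submodule.span ℝ (Set.range dv) ≤ (affineSpan ℝ tightFace).direction := by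
    rw [Submodule.span_le]
    rintro _ ⟨i, rfl⟩
    have := AffineSubspace.vsub_mem_direction (subset_affineSpan ℝ _ (hq i))
      (subset_affineSpan ℝ _ hq0)
    simpa using this
  -- upper bound: tightFace ⊆ span of wv
  have hup : tightFace ⊆ (Submodule.span ℝ (Set.range wv) : Set (Fin 9 → ℝ)) := by
    rintro v ⟨p, hp, hv, ht⟩
    obtain ⟨r1, r2, r3, r4⟩ := face_rel hp ht
    have hcomb : v = p.1 1 • wv 0 + p.1 2 • wv 1 + p.2 1 1 • wv 2 + p.2 2 2 • wv 3
        + p.2 0 0 • wv 4 := by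
      rw [hv]
      simp only [wv, Matrix.cons_val_zero, Matrix.cons_val_one, Matrix.head_cons,
        Matrix.cons_val_two, Matrix.tail_cons, Matrix.cons_val_three, Matrix.cons_val_four]
      simp only [Matrix.smul_cons, smul_eq_mul, Matrix.smul_empty, Matrix.cons_add_cons,
        Matrix.empty_add_empty]
      simp only [Matrix.vecCons, Fin.cons_inj]
      refine ⟨by linarith, by linarith, by linarith, by linarith, by linarith, by linarith,
        by linarith, by linarith, by linarith, trivial⟩
    rw [hcomb]
    refine Submodule.add_mem _ (Submodule.add_mem _ (Submodule.add_mem _ (Submodule.add_mem _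
      ?_ ?_) ?_) ?_) ?_ <;>
      exact Submodule.smul_mem _ _ (Submodule.subset_span ⟨_, rfl⟩)
  have hupper : (affineSpan ℝ tightFace).direction ≤ Submodule.span ℝ (Set.range wv) := by
    have h1 : affineSpan ℝ tightFace ≤ (Submodule.span ℝ tightFace).toAffineSubspace :=
      affineSpan_le_toAffineSubspace_span
    have h2 := AffineSubspace.direction_le h1
    rw [Submodule.toAffineSubspace_direction] at h2
    exact h2.trans (Submodule.span_le.mpr hup)
  have hrank_low : Module.finrank ℝ (Submodule.span ℝ (Set.range dv)) = 5 := by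
    rw [finrank_span_eq_card dv_linearIndependent]
    simp
  have hrank_up : Module.finrank ℝ (Submodule.span ℝ (Set.range wv)) ≤ 5 := by
    simpa [Set.finrank] using finrank_range_le_card (R := ℝ) wv
  have l1 : 5 ≤ Module.finrank ℝ (affineSpan ℝ tightFace).direction := by
    rw [← hrank_low]
    exact Submodule.finrank_mono hlow
  have l2 : Module.finrank ℝ (affineSpan ℝ tightFace).direction ≤ 5 :=
    le_trans (Submodule.finrank_mono hupper) hrank_up
  omega
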